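/- arXiv:2104.05249 — 5 statements merged into one kernel-verified Lean document; each statement's English description precedes it below -/
import Mathlib

section
/- Let a W-model be playable. Let a ∈ A be an agent, let (ℤ, 𝓩) be a measurable space whose σ-field 𝓩 contains all singletons, and let Z : H → ℤ be measurable from 𝓘_a to 𝓩. Then for any two pure W-strategy profiles λ = (λ_b)_{b∈A} and λ' = (λ'_b)_{b∈A} such that λ_b = λ'_b for every b ≠ a, one has Z ∘ S_λ = Z ∘ S_{λ'} (as maps Ω → ℤ). -/
open MeasureTheory

namespace WG

variable {A Ω : Type*} {U : A → Type*}

/-- The configuration (hybrid) space of a W-model. -/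
abbrev Config (U : A → Type*) (Ω : Type*) := (∀ a, U a) × Ω

section Core

variable [MeasurableSpace Ω] [∀ a, MeasurableSpace (U a)]

/-- A pure W-strategy profile: each agent's strategy is measurable w.r.t. his
information field. -/
def IsPureProfile (Ifld : A → MeasurableSpace (Config U Ω))
    (lam : ∀ a : A, Config U Ω → U a) : Prop :=
  ∀ a, @Measurable _ _ (Ifld a) _ (lam a)

/-- `u` solves the closed-loop equations for profile `lam` and state of Nature `ω`. -/
def IsSolution (lam : ∀ a : A, Config U Ω → U a) (ω : Ω) (u : ∀ a, U a) : Prop :=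
  ∀ a, u a = lam a (u, ω)

/-- Playability: unique solution of the closed-loop equations for every pure
W-strategy profile and every state of Nature. -/
def Playable (Ifld : A → MeasurableSpace (Config U Ω)) : Prop :=
  ∀ lam, IsPureProfile Ifld lam → ∀ ω : Ω, ∃! u, IsSolution lam ω u

/-- The solution map `S_λ` of a playable W-model. -/
noncomputable def solMap {Ifld : A → MeasurableSpace (Config U Ω)} (hP : Playable Ifld)
    {lam : ∀ a : A, Config U Ω → U a} (hlam : IsPureProfile Ifld lam) (ω : Ω) :
    Config U Ω :=
  ((hP lam hlam ω).exists.choose, ω)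

/-- The profile `(u_B, λ_{-B})`: constant actions `uB` on `B`, components of `lam` off `B`. -/
noncomputable def substProfile (B : Set A) (uB : ∀ a : A, U a)
    (lam : ∀ a : A, Config U Ω → U a) : ∀ a : A, Config U Ω → U a := fun a =>
  haveI := Classical.dec (a ∈ B)
  if a ∈ B then (fun _ => uB a) else lam a

theorem substProfile_isPure {Ifld : A → MeasurableSpace (Config U Ω)}
    {lam : ∀ a : A, Config U Ω → U a} (hlam : IsPureProfile Ifld lam)
    (B : Set A) (uB : ∀ a : A, U a) :
    IsPureProfile Ifld (substProfile B uB lam) := by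
  intro a
  by_cases h : a ∈ B
  · simpa [substProfile, h] using (measurable_const : @Measurable _ _ (Ifld a) _ fun _ => uB a)
  · simpa [substProfile, h] using hlam a

/-- The cylinder σ-field on the configuration space generated by the action
coordinate of agent `a`. -/
def actionCyl (a : A) : MeasurableSpace (Config U Ω) :=
  MeasurableSpace.comap (fun h : Config U Ω => h.1 a) inferInstance

/-- The cylinder σ-field on the configuration space generated by Nature's coordinate. -/
def natureCyl : MeasurableSpace (Config U Ω) :=
  MeasurableSpace.comap (fun h : Config U Ω => h.2) inferInstance

end Core

section Orderings

/-- `κ` is a total ordering of the agents of `Ap` (encoded as a duplicate-free list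
enumerating exactly `Ap`). -/
def IsTotalOrderingOf (Ap : Finset A) (κ : List A) : Prop :=
  κ.Nodup ∧ ∀ a, a ∈ κ ↔ a ∈ Ap

/-- A `p`-configuration-ordering: a map from configurations to total orderings of `Ap`. -/
def ConfigOrdering (Ap : Finset A) (φ : Config U Ω → List A) : Prop :=
  ∀ h, IsTotalOrderingOf Ap (φ h)

/-- The set `H_κ^φ` of configurations whose ordering starts with `κ`. -/
def ordEvent (φ : Config U Ω → List A) (κ : List A) : Set (Config U Ω) :=
  {h | (φ h).take κ.length = κ}

variable [MeasurableSpace Ω] [∀ a, MeasurableSpace (U a)]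

/-- Perfect recall of the player with agents `Ap` w.r.t. the configuration-ordering `φ`.
An ordering `κ ∈ Σ^p` is encoded as `κ₁ ++ [a]` with `first(κ) = κ₁`, `last(κ) = a`. -/
def PerfectRecall (Ifld : A → MeasurableSpace (Config U Ω)) (Ap : Finset A)
    (φ : Config U Ω → List A) : Prop :=
  ∀ (κ₁ : List A) (a : A), (κ₁ ++ [a]).Nodup → (∀ b ∈ κ₁ ++ [a], b ∈ Ap) →
    ∀ s : Set (Config U Ω),
      MeasurableSet[⨆ b ∈ κ₁, (actionCyl (U := U) (Ω := Ω) b ⊔ Ifld b)] s →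
      MeasurableSet[Ifld a] (ordEvent φ (κ₁ ++ [a]) ∩ s)

/-- The σ-field `𝓗^p_B`: generated by Nature, the actions of agents in `B`, and the
actions of the agents not belonging to player `p`. -/
def subHistField (Ap : Finset A) (B : Set A) : MeasurableSpace (Config U Ω) :=
  natureCyl ⊔ (⨆ b ∈ B, actionCyl b) ⊔ (⨆ c ∈ ((Ap : Set A))ᶜ, actionCyl c)

/-- Partial causality of the player with agents `Ap` w.r.t. `φ`. -/
def PartialCausality (Ifld : A → MeasurableSpace (Config U Ω)) (Ap : Finset A)
    (φ : Config U Ω → List A) : Prop :=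
  ∀ (κ₁ : List A) (a : A), (κ₁ ++ [a]).Nodup → (∀ b ∈ κ₁ ++ [a], b ∈ Ap) →
    ∀ s : Set (Config U Ω), MeasurableSet[Ifld a] s →
      MeasurableSet[subHistField (U := U) (Ω := Ω) Ap {b | b ∈ κ₁}] (ordEvent φ (κ₁ ++ [a]) ∩ s)

end Orderings

section Mixed

variable [MeasurableSpace Ω] [∀ a, MeasurableSpace (U a)]

/-- The σ-field on the randomization space `𝕎 = A → ℝ` generated by the coordinates in `s`. -/
def coordField (s : Set A) : MeasurableSpace (A → ℝ) :=
  ⨆ a ∈ s, MeasurableSpace.comap (fun w => w a) inferInstance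

variable {P : Type*}

/-- An A-mixed strategy profile (all players at once, `pl` assigning each agent to his
player): the action of agent `a` may depend measurably on the randomization coordinates
of the agents of his player and on his information. -/
def IsMixedProfile (Ifld : A → MeasurableSpace (Config U Ω)) (pl : A → P)
    (m : ∀ a : A, (A → ℝ) × Config U Ω → U a) : Prop :=
  ∀ a, @Measurable _ _ ((coordField {b | pl b = pl a}).prod (Ifld a)) _ (m a)

theorem isPureProfile_section {Ifld : A → MeasurableSpace (Config U Ω)} {pl : A → P}
    {m : ∀ a : A, (A → ℝ) × Config U Ω → U a} (hm : IsMixedProfile Ifld pl m)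
    (w : A → ℝ) : IsPureProfile Ifld (fun a h => m a (w, h)) := fun a =>
  (hm a).comp (@measurable_prodMk_left _ _ (coordField {b | pl b = pl a}) (Ifld a) w)

/-- The map `T_m : (ω, w) ↦ S_{m(w, ·)}(ω)`. -/
noncomputable def mixedSol {Ifld : A → MeasurableSpace (Config U Ω)} (hP : Playable Ifld)
    {pl : A → P} {m : ∀ a : A, (A → ℝ) × Config U Ω → U a}
    (hm : IsMixedProfile Ifld pl m) (x : Ω × (A → ℝ)) : Config U Ω :=
  solMap hP (isPureProfile_section hm x.2) x.1

/-- An A-behavioral strategy of the player with agents `Ap`: agent `a`'s action depends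
(measurably) only on his own randomization coordinate and his information. -/
def IsBehavioralOn (Ifld : A → MeasurableSpace (Config U Ω)) (Ap : Finset A)
    (mB : ∀ a : A, ℝ → Config U Ω → U a) : Prop :=
  ∀ a ∈ Ap, @Measurable (ℝ × Config U Ω) (U a)
    (MeasurableSpace.prod inferInstance (Ifld a)) _ (fun q => mB a q.1 q.2)

/-- Replace, in the profile `m`, the components of the agents of `Ap` by the
behavioral strategy `mB`. -/
noncomputable def combineProfile (Ap : Finset A)
    (mB : ∀ a : A, ℝ → Config U Ω → U a)
    (m : ∀ a : A, (A → ℝ) × Config U Ω → U a) :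
    ∀ a : A, (A → ℝ) × Config U Ω → U a := fun a x =>
  haveI := Classical.dec (a ∈ Ap)
  if a ∈ Ap then mB a (x.1 a) x.2 else m a x

/-- `ℓW` is the product of copies of `μ₀` (marginal characterization on finite cylinders). -/
def IsProductOf (μ₀ : Measure ℝ) (ℓW : Measure (A → ℝ)) : Prop :=
  ∀ (s : Finset A) (E : A → Set ℝ), (∀ a ∈ s, MeasurableSet (E a)) →
    ℓW {w | ∀ a ∈ s, w a ∈ E a} = ∏ a ∈ s, μ₀ (E a)

/-- `p`-strong measurability: joint measurability of all partial solution maps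
`Ŝ^B_{λ_{-B}}` for `B ⊆ A^p`. -/
def PStronglyMeasurable {Ifld : A → MeasurableSpace (Config U Ω)} (hP : Playable Ifld)
    (Ap : Finset A) : Prop :=
  ∀ (B : Set A), B ⊆ (Ap : Set A) →
    ∀ (lam : ∀ a : A, Config U Ω → U a) (hlam : IsPureProfile Ifld lam),
      @Measurable (Ω × (∀ a, U a)) (Config U Ω)
        (MeasurableSpace.prod inferInstance
          (⨆ b ∈ B, MeasurableSpace.comap (fun u : ∀ a, U a => u b) inferInstance))
        inferInstance
        (fun x => solMap hP (substProfile_isPure hlam B x.2) x.1)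

/-- The uniform (Lebesgue) probability on `[0,1] ⊆ ℝ`. -/
noncomputable def unif : Measure ℝ := volume.restrict (Set.Icc (0 : ℝ) 1)

end Mixed

section Kernels

/-- Product of the action spaces of the agents enumerated by the list `l`. -/
abbrev SubProd (U : A → Type*) (l : List A) := ∀ b : {x // x ∈ l}, U b.val

/-- Glue a `κ₁`-indexed family of actions with an action of the last agent `a`. -/
noncomputable def extendProd {U : A → Type*} (κ₁ : List A) (a : A)
    (u : SubProd U κ₁) (x : U a) : SubProd U (κ₁ ++ [a]) := fun b =>
  haveI := Classical.dec (b.val ∈ κ₁)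
  if hb : b.val ∈ κ₁ then u ⟨b.val, hb⟩
  else
    have hba : b.val = a := by
      rcases List.mem_append.mp b.2 with h | h
      · exact absurd h hb
      · simpa using h
    cast (congrArg U hba).symm x

/-- `η` is a regular conditional distribution of `μ` given the random variable `X`. -/
def IsRCD {α β : Type*} [MeasurableSpace α] [MeasurableSpace β]
    (μ : Measure α) (X : α → β) (η : β → Measure α) : Prop :=
  (∀ z, IsProbabilityMeasure (η z)) ∧
  (∀ ⦃E : Set α⦄, MeasurableSet E → Measurable fun z => η z E) ∧
  (∀ ⦃E : Set α⦄, MeasurableSet E → ∀ ⦃C : Set β⦄, MeasurableSet C →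
    μ (E ∩ X ⁻¹' C) = ∫⁻ z in C, η z E ∂(Measure.map X μ))

/-- Merge randomizations: coordinates in `Ap` taken from `wp`, the others from `wmp`. -/
noncomputable def merge (Ap : Finset A) (wp : ↥Ap → ℝ) (wmp : A → ℝ) : A → ℝ := fun a =>
  haveI := Classical.dec (a ∈ Ap)
  if h : a ∈ Ap then wp ⟨a, h⟩ else wmp a

end Kernels

end WG


/-- In a playable W-model, let `a` be an agent, `(ℤ, 𝓩)` a measurable
space whose σ-field contains the singletons, and `Z : H → ℤ` measurable w.r.t. the
information field `𝓘_a` of agent `a`. Then for any two pure W-strategy profiles that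
coincide off `a`, one has `Z ∘ S_λ = Z ∘ S_{λ'}`. -/
theorem statement2
    {A Ω : Type*} [MeasurableSpace Ω] {U : A → Type*} [∀ a, MeasurableSpace (U a)]
    (Ifld : A → MeasurableSpace (WG.Config U Ω))
    (hIle : ∀ a, Ifld a ≤ (inferInstance : MeasurableSpace (WG.Config U Ω)))
    (hP : WG.Playable Ifld)
    (a : A) {Zt : Type*} [MeasurableSpace Zt] [MeasurableSingletonClass Zt]
    (Z : WG.Config U Ω → Zt) (hZ : @Measurable _ _ (Ifld a) _ Z)
    (lam lam' : ∀ b : A, WG.Config U Ω → U b)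
    (hlam : WG.IsPureProfile Ifld lam) (hlam' : WG.IsPureProfile Ifld lam')
    (hagree : ∀ b, b ≠ a → lam b = lam' b) :
    (fun ω => Z (WG.solMap hP hlam ω)) = fun ω => Z (WG.solMap hP hlam' ω) := by
  classical
  funext ω
  by_contra hne
  set u : ∀ b, U b := (hP lam hlam ω).exists.choose with hudef
  have hu : WG.IsSolution lam ω u := (hP lam hlam ω).exists.choose_spec
  set u' : ∀ b, U b := (hP lam' hlam' ω).exists.choose with hu'def
  have hu' : WG.IsSolution lam' ω u' := (hP lam' hlam' ω).exists.choose_spec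
  have hsol : WG.solMap hP hlam ω = (u, ω) := rfl
  have hsol' : WG.solMap hP hlam' ω = (u', ω) := rfl
  set z₀ := Z (u, ω) with hz₀
  have hne' : Z (u', ω) ≠ z₀ := by
    intro h
    exact hne (by rw [hsol, hsol', h])
  set s : Set (WG.Config U Ω) := Z ⁻¹' {z₀} with hsdef
  have hs : MeasurableSet[Ifld a] s := hZ (measurableSet_singleton z₀)
  set mu : ∀ b : A, WG.Config U Ω → U b :=
    Function.update lam a (s.piecewise (lam a) (lam' a)) with hmudef
  have hmu : WG.IsPureProfile Ifld mu := by
    intro b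
    by_cases hb : b = a
    · subst hb
      rw [hmudef, Function.update_self]
      exact Measurable.piecewise hs (hlam b) (hlam' b)
    · rw [hmudef, Function.update_of_ne hb]
      exact hlam b
  have husol : WG.IsSolution mu ω u := by
    intro b
    by_cases hb : b = a
    · subst hb
      rw [hmudef, Function.update_self]
      have hmem : (u, ω) ∈ s := by simp [hsdef, hz₀]
      rw [Set.piecewise_eq_of_mem _ _ _ hmem]
      exact hu b
    · rw [hmudef, Function.update_of_ne hb]
      exact hu b
  have hu'sol : WG.IsSolution mu ω u' := by
    intro b
    by_cases hb : b = a
    · subst hb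
      rw [hmudef, Function.update_self]
      have hmem : (u', ω) ∉ s := by simpa [hsdef] using hne'
      rw [Set.piecewise_eq_of_notMem _ _ _ hmem]
      exact hu' b
    · rw [hmudef, Function.update_of_ne hb, hagree b hb]
      exact hu' b
  have heq : u = u' := by
    obtain ⟨v, -, hvuniq⟩ := hP mu hmu ω
    rw [hvuniq u husol, hvuniq u' hu'sol]
  exact hne' (by rw [← heq])
end

section
/- In a playable W-model, if a player p satisfies perfect recall with some p-configuration-ordering φ, then p satisfies partial causality with the same p-configuration-ordering φ. -/
open MeasureTheory

namespace WG

variable {A Ω : Type*} {U : A → Type*}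

section Aux

variable [MeasurableSpace Ω] [∀ a, MeasurableSpace (U a)]

/-- In a playable W-model, every set in the information field of an agent `c` is
invariant under changes of the action coordinate of `c` itself. -/
theorem invariance_of_info [DecidableEq A] {Ifld : A → MeasurableSpace (Config U Ω)}
    (hP : Playable Ifld) (c : A) {I : Set (Config U Ω)}
    (hI : MeasurableSet[Ifld c] I) (u : ∀ b, U b) (ω : Ω) (z : U c)
    (hu : (u, ω) ∈ I) : (Function.update u c z, ω) ∈ I := by
  classical
  by_contra hnot
  set lam : ∀ b : A, Config U Ω → U b :=
    Function.update (fun b (_ : Config U Ω) => u b) c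
      (fun h => if h ∈ I then z else u c) with hlam
  have hpure : IsPureProfile Ifld lam := by
    intro b
    by_cases hb : b = c
    · subst hb
      have hbeq : lam b = fun h => if h ∈ I then z else u b := by
        simp [hlam]
      rw [hbeq]
      exact Measurable.piecewise (s := I) hI
        (measurable_const : @Measurable _ _ (Ifld b) _ _)
        (measurable_const : @Measurable _ _ (Ifld b) _ _)
    · have hbeq : lam b = fun _ => u b := by
        simp [hlam, Function.update_of_ne hb]
      rw [hbeq]
      exact measurable_const
  obtain ⟨v, hv, -⟩ := hP lam hpure ω
  have hvb : ∀ b, b ≠ c → v b = u b := fun b hb => by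
    have h := hv b
    rwa [hlam, Function.update_of_ne hb] at h
  have hvc : v c = if (v, ω) ∈ I then z else u c := by
    have h := hv c
    rwa [hlam, Function.update_self] at h
  by_cases hmem : (v, ω) ∈ I
  · have hveq : v = Function.update u c z := by
      funext b
      by_cases hb : b = c
      · subst hb; rw [hvc, if_pos hmem, Function.update_self]
      · rw [hvb b hb, Function.update_of_ne hb]
    rw [hveq] at hmem
    exact hnot hmem
  · have hveq : v = u := by
      funext b
      by_cases hb : b = c
      · subst hb; rw [hvc, if_neg hmem]
      · exact hvb b hb
    rw [hveq] at hmem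
    exact hmem hu

end Aux

end WG


/-- In a playable W-model, if a player `p` (with agents `Ap`) satisfies
perfect recall with some `p`-configuration-ordering `φ`, then she satisfies partial
causality with the same `φ`. -/
theorem statement4
    {A Ω : Type*} [MeasurableSpace Ω] {U : A → Type*} [∀ a, MeasurableSpace (U a)]
    (Ifld : A → MeasurableSpace (WG.Config U Ω))
    (hIle : ∀ a, Ifld a ≤ (inferInstance : MeasurableSpace (WG.Config U Ω)))
    (hP : WG.Playable Ifld)
    (Ap : Finset A) (hApne : Ap.Nonempty)
    (φ : WG.Config U Ω → List A) (hφ : WG.ConfigOrdering Ap φ)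
    (hPR : WG.PerfectRecall Ifld Ap φ) :
    WG.PartialCausality Ifld Ap φ := by
  classical
  intro κ₁ a hnd hmem s hs
  set κ : List A := κ₁ ++ [a] with hκ
  set T : Set (WG.Config U Ω) := WG.ordEvent φ κ ∩ s with hTdef
  have haκ : a ∈ κ := by simp [hκ]
  have haκ₁ : a ∉ κ₁ := by
    have := hnd
    rw [hκ, List.nodup_append] at this
    intro hmem'
    exact this.2.2 a hmem' a (by simp) rfl
  -- `H_κ ∈ 𝓘_a`
  have hHκ : MeasurableSet[Ifld a] (WG.ordEvent φ κ) := by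
    have h := hPR κ₁ a hnd hmem Set.univ MeasurableSet.univ
    simpa using h
  have hTmeas : MeasurableSet[Ifld a] T := hHκ.inter hs
  -- one-coordinate invariance of `T`
  have key : ∀ c, c ∈ Ap → c ∉ κ₁ → ∀ (u : ∀ b, U b) (ω : Ω) (z : U c),
      (u, ω) ∈ T → (Function.update u c z, ω) ∈ T := by
    intro c hcAp hcκ₁ u ω z hu
    by_cases hca : c = a
    · subst hca
      exact WG.invariance_of_info hP c hTmeas u ω z hu
    · -- `c ∉ κ`
      have hcκ : c ∉ κ := by
        rw [hκ]
        simp [hcκ₁, hca]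
      obtain ⟨hLnd, hLmem⟩ := hφ (u, ω)
      have hcL : c ∈ φ (u, ω) := (hLmem c).mpr hcAp
      obtain ⟨m₁, m₂, hL⟩ := List.append_of_mem hcL
      have hpre1 : (m₁ ++ [c]) <+: φ (u, ω) := ⟨m₂, by rw [hL]; simp⟩
      have huord : (φ (u, ω)).take κ.length = κ := hu.1
      have hκpre : κ <+: φ (u, ω) := by
        rw [← huord]; exact List.take_prefix _ _
      have hκm : κ <+: m₁ := by
        rcases List.prefix_or_prefix_of_prefix hpre1 hκpre with h | h
        · exact absurd (h.subset (by simp)) hcκ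
        · have hlen : κ.length ≤ m₁.length := by
            by_contra hgt
            push_neg at hgt
            have hle2 : κ.length ≤ m₁.length + 1 := by
              have := h.length_le
              simpa using this
            have heq : κ = m₁ ++ [c] := h.eq_of_length (by simp; omega)
            exact hcκ (by rw [heq]; simp)
          exact List.prefix_of_prefix_length_le h (List.prefix_append m₁ [c]) hlen
      have ham₁ : a ∈ m₁ := hκm.subset haκ
      have hnd' : (m₁ ++ [c]).Nodup := hLnd.sublist hpre1.sublist
      have hmem' : ∀ b ∈ m₁ ++ [c], b ∈ Ap := fun b hb =>
        (hLmem b).mp (hpre1.subset hb)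
      have hsT : MeasurableSet[⨆ b ∈ m₁, WG.actionCyl (U := U) (Ω := Ω) b ⊔ Ifld b] T := by
        have hle : Ifld a ≤ ⨆ b ∈ m₁, WG.actionCyl (U := U) (Ω := Ω) b ⊔ Ifld b :=
          le_trans le_sup_right
            (le_iSup₂ (f := fun b (_ : b ∈ m₁) => WG.actionCyl (U := U) (Ω := Ω) b ⊔ Ifld b)
              a ham₁)
        exact hle _ hTmeas
      have hU : MeasurableSet[Ifld c] (WG.ordEvent φ (m₁ ++ [c]) ∩ T) :=
        hPR m₁ c hnd' hmem' T hsT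
      have huU : (u, ω) ∈ WG.ordEvent φ (m₁ ++ [c]) ∩ T := by
        refine ⟨?_, hu⟩
        show (φ (u, ω)).take (m₁ ++ [c]).length = m₁ ++ [c]
        exact (List.prefix_iff_eq_take.mp hpre1).symm
      exact (WG.invariance_of_info hP c hU u ω z huU).2
  -- two-sided invariance
  have key2 : ∀ c, c ∈ Ap → c ∉ κ₁ → ∀ (u : ∀ b, U b) (ω : Ω) (z : U c),
      ((u, ω) ∈ T ↔ (Function.update u c z, ω) ∈ T) := by
    intro c h1 h2 u ω z
    constructor
    · exact key c h1 h2 u ω z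
    · intro h
      have h' := key c h1 h2 (Function.update u c z) ω (u c) h
      rwa [Function.update_idem, Function.update_eq_self] at h'
  by_cases hne : Nonempty (∀ b, U b)
  · obtain ⟨v⟩ := hne
    set C : Finset A := Ap.filter (fun b => b ∉ κ₁) with hC
    have hCmem : ∀ b, b ∈ C ↔ b ∈ Ap ∧ b ∉ κ₁ := by
      intro b; simp [hC]
    have inv : ∀ D : Finset A, D ⊆ C → ∀ (u : ∀ b, U b) (ω : Ω),
        ((u, ω) ∈ T ↔ ((fun b => if b ∈ D then v b else u b), ω) ∈ T) := by
      intro D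
      induction D using Finset.induction_on with
      | empty =>
        intro _ u ω
        simp
      | @insert c D hcD ih =>
        intro hsub u ω
        have hc : c ∈ C := hsub (Finset.mem_insert_self _ _)
        have hfun : (fun b => if b ∈ insert c D then v b else u b)
            = Function.update (fun b => if b ∈ D then v b else u b) c (v c) := by
          funext b
          by_cases hb : b = c
          · subst hb
            simp [hcD]
          · simp [Function.update_of_ne hb, Finset.mem_insert, hb]
        rw [hfun]
        exact (ih (fun x hx => hsub (Finset.mem_insert_of_mem hx)) u ω).trans
          (key2 c ((hCmem c).mp hc).1 ((hCmem c).mp hc).2 _ ω (v c))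
    set j : WG.Config U Ω → WG.Config U Ω :=
      fun h => ((fun b => if b ∈ C then v b else h.1 b), h.2) with hj
    have hTj : T = j ⁻¹' T := by
      ext h
      exact inv C le_rfl h.1 h.2
    have hTH : MeasurableSet T := hIle a _ hTmeas
    have hjm : @Measurable (WG.Config U Ω) (WG.Config U Ω)
        (WG.subHistField (U := U) (Ω := Ω) Ap {b | b ∈ κ₁})
        (inferInstance : MeasurableSpace (WG.Config U Ω)) j := by
      set M : MeasurableSpace (WG.Config U Ω) :=
        WG.subHistField (U := U) (Ω := Ω) Ap {b | b ∈ κ₁} with hM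
      have h1 : @Measurable _ _ M _ (fun h : WG.Config U Ω => (j h).1) := by
        apply measurable_pi_lambda
        intro b
        by_cases hb : b ∈ C
        · have heq : (fun h : WG.Config U Ω => (j h).1 b) = fun _ => v b := by
            funext h; simp [hj, hb]
          rw [heq]
          exact measurable_const
        · have heq : (fun h : WG.Config U Ω => (j h).1 b)
              = fun h : WG.Config U Ω => h.1 b := by
            funext h; simp [hj, hb]
          rw [heq]
          have hcoord : @Measurable _ _ (WG.actionCyl (U := U) (Ω := Ω) b) _
              (fun h : WG.Config U Ω => h.1 b) :=
            measurable_iff_comap_le.mpr le_rfl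
          have hle : WG.actionCyl (U := U) (Ω := Ω) b ≤ M := by
            rw [hM]
            unfold WG.subHistField
            rcases not_and_or.mp ((hCmem b).not.mp hb) with hbAp | hbκ₁
            · refine le_trans ?_ le_sup_right
              exact le_iSup₂ (f := fun c (_ : c ∈ ((Ap : Set A))ᶜ) =>
                WG.actionCyl (U := U) (Ω := Ω) c) b hbAp
            · rw [not_not] at hbκ₁
              refine le_trans ?_ (le_trans le_sup_right le_sup_left)
              exact le_iSup₂ (f := fun c (_ : c ∈ {b | b ∈ κ₁}) =>
                WG.actionCyl (U := U) (Ω := Ω) c) b hbκ₁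
          exact hcoord.mono hle le_rfl
      have h2 : @Measurable _ _ M _ (fun h : WG.Config U Ω => (j h).2) := by
        have hcoord : @Measurable _ _ (WG.natureCyl (U := U) (Ω := Ω)) _
            (fun h : WG.Config U Ω => h.2) :=
          measurable_iff_comap_le.mpr le_rfl
        have hle : WG.natureCyl (U := U) (Ω := Ω) ≤ M := by
          rw [hM]; unfold WG.subHistField
          exact le_trans le_sup_left le_sup_left
        exact hcoord.mono hle le_rfl
      exact h1.prod h2
    rw [hTj]
    exact hjm hTH
  · have hEmpty : IsEmpty (WG.Config U Ω) := by
      rw [not_nonempty_iff] at hne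
      exact ⟨fun h => hne.false h.1⟩
    have hT0 : T = ∅ := Set.eq_empty_of_isEmpty T
    rw [hT0]
    exact @MeasurableSet.empty _ (WG.subHistField (U := U) (Ω := Ω) Ap {b | b ∈ κ₁})
end

section
/- Support lemma for behavioral strategies. Consider a playable and measurable W-game whose agent set A is countable and in which 𝓕 and each 𝓤_a contain all singletons; fix a player p with A^p finite. Let ν be a probability on (Ω, 𝓕), m^{-p} an A-mixed strategy of the other players, m^p an A-mixed strategy of player p, and m'^p an A-behavioral strategy of player p. For a ∈ A^p and h ∈ H define 𝕎'_a[h] = {w_a ∈ [0,1] : m'^p_a(w_a, h) = h_a}. Then for every h ∈ H: if Q^ν_{(m^p, m^{-p})} = Q^ν_{(m'^p, m^{-p})} and Q^ν_{(m^p, m^{-p})}({h}) > 0, then ℓ_a(𝕎'_a[h]) > 0 for every a ∈ A^p. -/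
open MeasureTheory

/-- **support lemma for behavioral strategies.** In a playable and
measurable W-game with countable agent set and all singletons measurable in Nature's
and the agents' action spaces, fix a player `p` with finitely many agents `Ap`, a
probability `ν`, an A-mixed strategy profile `m` and an A-behavioral strategy `mB` of
player `p`. If the pushforward probabilities of `m` and of `m` with `p`'s component
replaced by `mB` agree and give positive mass to a configuration `h`, then for each
agent `a` of `p`, the set `𝕎'_a[h] = {w_a ∈ [0,1] : mB_a(w_a, h) = h_a}` has positive
Lebesgue measure. -/
theorem statement12
    {A Ω : Type*} [Countable A] [MeasurableSpace Ω] [MeasurableSingletonClass Ω]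
    {U : A → Type*} [∀ a, MeasurableSpace (U a)] [∀ a, MeasurableSingletonClass (U a)]
    {P : Type*} (pl : A → P)
    (Ifld : A → MeasurableSpace (WG.Config U Ω))
    (hIle : ∀ a, Ifld a ≤ (inferInstance : MeasurableSpace (WG.Config U Ω)))
    (hP : WG.Playable Ifld)
    (p : P) (Ap : Finset A) (hAp : ∀ a, a ∈ Ap ↔ pl a = p) (hApne : Ap.Nonempty)
    (ℓW : Measure (A → ℝ)) (hℓWprob : IsProbabilityMeasure ℓW)
    (hℓW : WG.IsProductOf WG.unif ℓW)
    (hT : ∀ (m' : ∀ a : A, (A → ℝ) × WG.Config U Ω → U a)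
        (hm' : WG.IsMixedProfile Ifld pl m'), Measurable (WG.mixedSol hP hm'))
    (ν : Measure Ω) (hν : IsProbabilityMeasure ν)
    (m : ∀ a : A, (A → ℝ) × WG.Config U Ω → U a) (hm : WG.IsMixedProfile Ifld pl m)
    (mB : ∀ a : A, ℝ → WG.Config U Ω → U a) (hmB : WG.IsBehavioralOn Ifld Ap mB)
    (hm' : WG.IsMixedProfile Ifld pl (WG.combineProfile Ap mB m))
    (h : WG.Config U Ω)
    (heq : Measure.map (WG.mixedSol hP hm) (ν.prod ℓW) =
      Measure.map (WG.mixedSol hP hm') (ν.prod ℓW))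
    (hpos : 0 < Measure.map (WG.mixedSol hP hm) (ν.prod ℓW) {h}) :
    ∀ a ∈ Ap, 0 < WG.unif {r : ℝ | mB a r h = h.1 a} := by
  intro a ha
  have hmeasT := hT _ hm'
  rw [heq, Measure.map_apply hmeasT (measurableSet_singleton h)] at hpos
  set S : Set ℝ := {r : ℝ | mB a r h = h.1 a} with hS
  have hSm : MeasurableSet S := by
    have hmeas : Measurable fun r => mB a r h := by
      have hc : @Measurable ℝ (ℝ × WG.Config U Ω) _
          (MeasurableSpace.prod inferInstance (Ifld a)) (fun r => (r, h)) :=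
        @Measurable.prodMk ℝ _ ℝ (WG.Config U Ω) _ (Ifld a) _ _ measurable_id
          (@measurable_const _ _ (Ifld a) _ h)
      exact (hmB a ha).comp hc
    exact hmeas (measurableSet_singleton (h.1 a))
  have hsub : WG.mixedSol hP hm' ⁻¹' {h} ⊆ Set.univ ×ˢ {w : A → ℝ | w a ∈ S} := by
    rintro ⟨ω, w⟩ hx
    simp only [Set.mem_preimage, Set.mem_singleton_iff] at hx
    refine ⟨trivial, ?_⟩
    have hsol := (hP _ (WG.isPureProfile_section hm' w) ω).exists.choose_spec a
    have hω : ω = h.2 := congrArg Prod.snd hx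
    have hu : (hP _ (WG.isPureProfile_section hm' w) ω).exists.choose = h.1 :=
      congrArg Prod.fst hx
    rw [hu, hω] at hsol
    simp only [WG.combineProfile, ha, if_true] at hsol
    show mB a (w a) h = h.1 a
    rw [← hsol]
  have hval : ℓW {w : A → ℝ | w a ∈ S} = WG.unif S := by
    have := hℓW {a} (fun _ => S) (fun _ _ => hSm)
    simpa using this
  have hprod : (ν.prod ℓW) (Set.univ ×ˢ {w : A → ℝ | w a ∈ S}) = WG.unif S := by
    rw [Measure.prod_prod, measure_univ, one_mul, hval]
  exact lt_of_lt_of_le hpos ((measure_mono hsub).trans_eq hprod)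
end

section
/- Suppose player p satisfies perfect recall with the p-configuration-ordering φ, and let m^p = (m^p_a)_{a∈A^p} be an A-mixed strategy of player p. Then for every ordering κ ∈ Σ^p, the map (w^p, h) ↦ (m^p_a(w^p, h))_{a∈range(κ)}, from 𝕎^p × H_κ^φ to ∏_{a∈range(κ)} U_a, is measurable with respect to the σ-field 𝒲^p ⊗ (H_κ^φ ∩ 𝓘_{last(κ)}), where H_κ^φ ∩ 𝓘_{last(κ)} denotes the trace of 𝓘_{last(κ)} on H_κ^φ. -/
open MeasureTheory

/-- Suppose player `p` (with finite agent set `Ap`) satisfies perfect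
recall with the `p`-configuration-ordering `φ`, and let `m^p` be an A-mixed strategy of
player `p` (each `m_a`, `a ∈ Ap`, measurable w.r.t. `𝒲^p ⊗ 𝓘_a`). Then for every
ordering `κ = κ₁ ++ [aL] ∈ Σ^p`, the map `(w, h) ↦ (m_a(w, h))_{a ∈ range κ}` defined
on `𝕎^p × H_κ^φ` is measurable w.r.t. `𝒲^p ⊗ (H_κ^φ ∩ 𝓘_{last κ})` (trace σ-field). -/
theorem statement15
    {A Ω : Type*} [MeasurableSpace Ω] {U : A → Type*} [∀ a, MeasurableSpace (U a)]
    (Ifld : A → MeasurableSpace (WG.Config U Ω))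
    (hIle : ∀ a, Ifld a ≤ (inferInstance : MeasurableSpace (WG.Config U Ω)))
    (Ap : Finset A) (hApne : Ap.Nonempty)
    (φ : WG.Config U Ω → List A) (hφ : WG.ConfigOrdering Ap φ)
    (hPR : WG.PerfectRecall Ifld Ap φ)
    (m : ∀ a : A, (A → ℝ) × WG.Config U Ω → U a)
    (hm : ∀ a ∈ Ap,
      @Measurable _ _ ((WG.coordField (↑Ap : Set A)).prod (Ifld a)) _ (m a))
    (κ₁ : List A) (aL : A)
    (hκnd : (κ₁ ++ [aL]).Nodup) (hκmem : ∀ b ∈ κ₁ ++ [aL], b ∈ Ap) :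
    @Measurable ((A → ℝ) × ↥(WG.ordEvent φ (κ₁ ++ [aL]))) (WG.SubProd U (κ₁ ++ [aL]))
      ((WG.coordField (↑Ap : Set A)).prod (MeasurableSpace.comap Subtype.val (Ifld aL)))
      inferInstance
      (fun x => fun b => m b.val (x.1, x.2.val)) := by
  letI mW : MeasurableSpace (A → ℝ) := WG.coordField (↑Ap : Set A)
  letI mH : MeasurableSpace ↥(WG.ordEvent φ (κ₁ ++ [aL])) :=
    MeasurableSpace.comap Subtype.val (Ifld aL)
  have key : ∀ b : {x // x ∈ κ₁ ++ [aL]},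
      @Measurable _ _ mH (Ifld b.val)
        (Subtype.val : ↥(WG.ordEvent φ (κ₁ ++ [aL])) → WG.Config U Ω) := by
    intro b
    rcases List.mem_append.mp b.2 with hb | hb
    · intro s hs
      have hs' : MeasurableSet[⨆ c ∈ κ₁,
          (WG.actionCyl (U := U) (Ω := Ω) c ⊔ Ifld c)] s :=
        (le_sup_right.trans
          (le_iSup₂ (f := fun c (_ : c ∈ κ₁) =>
            WG.actionCyl (U := U) (Ω := Ω) c ⊔ Ifld c) b.val hb)) s hs
      refine ⟨_, hPR κ₁ aL hκnd hκmem s hs', ?_⟩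
      ext x
      simp only [Set.mem_preimage, Set.mem_inter_iff]
      exact and_iff_right x.2
    · have hba : b.val = aL := by simpa using hb
      rw [hba]
      exact measurable_iff_comap_le.mpr le_rfl
  rw [measurable_pi_iff]
  intro b
  exact (hm b.val (hκmem _ b.2)).comp
    (measurable_fst.prodMk ((key b).comp measurable_snd))
end

section
/- Doob factorization under perfect recall. Suppose the agent set A is countable, player p (with A^p finite) satisfies perfect recall with the p-configuration-ordering φ and the Borel measurable functional information assumption (with standard Borel spaces ℤ_a and measurable maps Z_a : H → ℤ_a generating 𝓘_a). Let κ ∈ Σ^p, let m^p be an A-mixed strategy of player p, and let Φ : ∏_{a∈range(κ)} U_a → ℝ be bounded measurable. Then there exists a measurable function Ψ : (𝕎 × ℤ_{last(κ)}, 𝒲 ⊗ 𝓩_{last(κ)}) → (ℝ, Borel) such that Ψ(w, Z_{last(κ)}(h)) = 1_{H_κ^φ}(h) · Φ((m^p_a(w^p, h))_{a∈range(κ)}) for all w ∈ 𝕎 and all h ∈ H. -/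
open MeasureTheory

section DoobAux

open MeasurableSpace

/-- The σ-field of sets `s` such that `T ∩ s` is `m₀`-measurable. -/
def interSigma {X : Type*} (m₀ : MeasurableSpace X) (T : Set X)
    (hT : MeasurableSet[m₀] T) : MeasurableSpace X where
  MeasurableSet' s := MeasurableSet[m₀] (T ∩ s)
  measurableSet_empty := by
    show MeasurableSet[m₀] (T ∩ ∅)
    rw [Set.inter_empty]; exact @MeasurableSet.empty _ m₀
  measurableSet_compl := fun s hs => by
    have h2 : T ∩ sᶜ = T \ (T ∩ s) := by
      ext x
      simp only [Set.mem_inter_iff, Set.mem_compl_iff, Set.mem_diff]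
      tauto
    show MeasurableSet[m₀] (T ∩ sᶜ)
    rw [h2]; exact hT.diff hs
  measurableSet_iUnion := fun f hf => by
    show MeasurableSet[m₀] (T ∩ ⋃ i, f i)
    rw [Set.inter_iUnion]; exact MeasurableSet.iUnion hf

theorem measurableSet_interSigma {X : Type*} {m₀ : MeasurableSpace X} {T : Set X}
    {hT : MeasurableSet[m₀] T} {s : Set X} :
    MeasurableSet[interSigma m₀ T hT] s ↔ MeasurableSet[m₀] (T ∩ s) := Iff.rfl

/-- Doob–Dynkin factorization for `ℝ≥0∞`-valued functions. -/
theorem factor_ennreal {X Y : Type*} {mY : MeasurableSpace Y} (q : X → Y) (F : X → ENNReal)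
    (hF : @Measurable X ENNReal (mY.comap q) _ F) :
    ∃ Ψ : Y → ENNReal, Measurable Ψ ∧ ∀ x, Ψ (q x) = F x := by
  have hsel : ∀ r : ℚ, ∃ S : Set Y, MeasurableSet S ∧
      q ⁻¹' S = F ⁻¹' (Set.Ioi (ENNReal.ofReal r)) := fun r =>
    MeasurableSpace.measurableSet_comap.mp (hF measurableSet_Ioi)
  choose S hSm hSq using hsel
  refine ⟨fun y => ⨆ r : ℚ, (S r).indicator (fun _ => ENNReal.ofReal r) y,
    Measurable.iSup fun r => measurable_const.indicator (hSm r), fun x => ?_⟩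
  have hmem : ∀ r : ℚ, q x ∈ S r ↔ ENNReal.ofReal r < F x := by
    intro r
    have : q x ∈ S r ↔ x ∈ q ⁻¹' S r := Iff.rfl
    rw [this, hSq r]
    exact Iff.rfl
  apply le_antisymm
  · refine iSup_le fun r => ?_
    by_cases h : q x ∈ S r
    · rw [Set.indicator_of_mem h]; exact ((hmem r).1 h).le
    · rw [Set.indicator_of_notMem h]; exact zero_le
  · refine le_of_forall_lt fun c hc => ?_
    obtain ⟨r, _, hcr, hrF⟩ := ENNReal.lt_iff_exists_rat_btwn.mp hc
    have hofr : (Real.toNNReal r : ENNReal) = ENNReal.ofReal r := rfl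
    rw [hofr] at hcr hrF
    have hmem' : q x ∈ S r := (hmem r).2 hrF
    calc c < ENNReal.ofReal r := hcr
      _ = (S r).indicator (fun _ => ENNReal.ofReal r) (q x) :=
        (Set.indicator_of_mem hmem' (fun _ => ENNReal.ofReal (r : ℝ))).symm
      _ ≤ ⨆ r : ℚ, (S r).indicator (fun _ => ENNReal.ofReal r) (q x) :=
        le_iSup (fun r : ℚ => (S r).indicator (fun _ => ENNReal.ofReal (r : ℝ)) (q x)) r

/-- Doob–Dynkin factorization for real-valued functions. -/
theorem factor_real {X Y : Type*} {mY : MeasurableSpace Y} (q : X → Y) (F : X → ℝ)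
    (hF : @Measurable X ℝ (mY.comap q) _ F) :
    ∃ Ψ : Y → ℝ, Measurable Ψ ∧ ∀ x, Ψ (q x) = F x := by
  obtain ⟨P, hPm, hP⟩ := factor_ennreal q (fun x => ENNReal.ofReal (F x))
    (ENNReal.measurable_ofReal.comp hF)
  obtain ⟨N, hNm, hN⟩ := factor_ennreal q (fun x => ENNReal.ofReal (-F x))
    (ENNReal.measurable_ofReal.comp hF.neg)
  refine ⟨fun y => (P y).toReal - (N y).toReal,
    hPm.ennreal_toReal.sub hNm.ennreal_toReal, fun x => ?_⟩
  simp only [hP x, hN x, ENNReal.toReal_ofReal']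
  rcases le_total 0 (F x) with h | h
  · rw [max_eq_left h, max_eq_right (neg_nonpos.mpr h)]; ring
  · rw [max_eq_right h, max_eq_left (neg_nonneg.mpr h)]; ring

end DoobAux

/-- **Doob factorization under perfect recall.** With a countable agent
set, suppose player `p` (with finite agent set `Ap`) satisfies perfect recall with `φ`
and the Borel measurable functional information assumption. Let `κ = κ₁ ++ [aL] ∈ Σ^p`,
`m^p` an A-mixed strategy of player `p`, and `Φ` a bounded measurable function on
`∏_{a ∈ range κ} U_a`. Then there is a measurable `Ψ : 𝕎 × ℤ_{last κ} → ℝ` with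
`Ψ(w, Z_{last κ}(h)) = 1_{H_κ^φ}(h) · Φ((m_a(w^p, h))_{a ∈ range κ})` everywhere. -/
theorem statement16
    {A Ω : Type*} [Countable A] [MeasurableSpace Ω] {U : A → Type*}
    [∀ a, MeasurableSpace (U a)]
    (Ifld : A → MeasurableSpace (WG.Config U Ω))
    (hIle : ∀ a, Ifld a ≤ (inferInstance : MeasurableSpace (WG.Config U Ω)))
    (Ap : Finset A) (hApne : Ap.Nonempty)
    (φ : WG.Config U Ω → List A) (hφ : WG.ConfigOrdering Ap φ)
    (hPR : WG.PerfectRecall Ifld Ap φ)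
    (Zt : A → Type*) [∀ a, MeasurableSpace (Zt a)]
    (hZsb : ∀ a ∈ Ap, StandardBorelSpace (Zt a))
    (Zf : ∀ a, WG.Config U Ω → Zt a)
    (hZm : ∀ a ∈ Ap, Measurable (Zf a))
    (hZgen : ∀ a ∈ Ap, MeasurableSpace.comap (Zf a) inferInstance = Ifld a)
    (κ₁ : List A) (aL : A)
    (hκnd : (κ₁ ++ [aL]).Nodup) (hκmem : ∀ b ∈ κ₁ ++ [aL], b ∈ Ap)
    (m : ∀ a : A, (A → ℝ) × WG.Config U Ω → U a)
    (hm : ∀ a ∈ Ap,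
      @Measurable _ _ ((WG.coordField (↑Ap : Set A)).prod (Ifld a)) _ (m a))
    (Φ : WG.SubProd U (κ₁ ++ [aL]) → ℝ)
    (hΦm : Measurable Φ) (hΦb : ∃ C, ∀ u, |Φ u| ≤ C) :
    ∃ Ψ : (A → ℝ) × Zt aL → ℝ, Measurable Ψ ∧
      ∀ (w : A → ℝ) (h : WG.Config U Ω),
        Ψ (w, Zf aL h) =
          Set.indicator (WG.ordEvent φ (κ₁ ++ [aL]))
            (fun h' => Φ fun b => m b.val (w, h')) h := by
  classical
  have haL : aL ∈ Ap := hκmem aL (by simp)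
  have hE : MeasurableSet[Ifld aL] (WG.ordEvent φ (κ₁ ++ [aL])) := by
    have := hPR κ₁ aL hκnd hκmem Set.univ (@MeasurableSet.univ _
      (⨆ b ∈ κ₁, (WG.actionCyl (U := U) (Ω := Ω) b ⊔ Ifld b)))
    simpa using this
  -- key: intersecting with the ordering event lands in `Ifld aL`
  have hKey : ∀ s : Set (WG.Config U Ω),
      MeasurableSet[(⨆ b ∈ κ₁, (WG.actionCyl (U := U) (Ω := Ω) b ⊔ Ifld b)) ⊔ Ifld aL] s →
      MeasurableSet[Ifld aL] (WG.ordEvent φ (κ₁ ++ [aL]) ∩ s) := by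
    have hle : (⨆ b ∈ κ₁, (WG.actionCyl (U := U) (Ω := Ω) b ⊔ Ifld b)) ⊔ Ifld aL ≤
        interSigma (Ifld aL) (WG.ordEvent φ (κ₁ ++ [aL])) hE := by
      refine sup_le ?_ ?_
      · intro s hs
        exact hPR κ₁ aL hκnd hκmem s hs
      · intro s hs
        exact hE.inter hs
    exact fun s hs => hle s hs
  -- product σ-algebras
  have hsndM : @Measurable _ _
      ((inferInstance : MeasurableSpace (A → ℝ)).prod (Ifld aL)) (Ifld aL)
      (Prod.snd : (A → ℝ) × WG.Config U Ω → WG.Config U Ω) :=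
    @measurable_snd _ _ _ (Ifld aL)
  have hT2 : MeasurableSet[(inferInstance : MeasurableSpace (A → ℝ)).prod (Ifld aL)]
      (Prod.snd ⁻¹' WG.ordEvent φ (κ₁ ++ [aL]) : Set ((A → ℝ) × WG.Config U Ω)) := hsndM hE
  have hKey2 : ∀ s : Set ((A → ℝ) × WG.Config U Ω),
      MeasurableSet[(inferInstance : MeasurableSpace (A → ℝ)).prod
        ((⨆ b ∈ κ₁, (WG.actionCyl (U := U) (Ω := Ω) b ⊔ Ifld b)) ⊔ Ifld aL)] s →
      MeasurableSet[(inferInstance : MeasurableSpace (A → ℝ)).prod (Ifld aL)]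
        ((Prod.snd ⁻¹' WG.ordEvent φ (κ₁ ++ [aL])) ∩ s) := by
    have hle : (inferInstance : MeasurableSpace (A → ℝ)).prod
        ((⨆ b ∈ κ₁, (WG.actionCyl (U := U) (Ω := Ω) b ⊔ Ifld b)) ⊔ Ifld aL) ≤
        interSigma _ (Prod.snd ⁻¹' WG.ordEvent φ (κ₁ ++ [aL])) hT2 := by
      refine sup_le ?_ ?_
      · intro s hs
        obtain ⟨t, ht, rfl⟩ := hs
        exact hT2.inter (@measurable_fst _ _ _ (Ifld aL) t ht)
      · intro s hs
        obtain ⟨t, ht, rfl⟩ := hs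
        show MeasurableSet[(inferInstance : MeasurableSpace (A → ℝ)).prod (Ifld aL)]
          ((Prod.snd ⁻¹' WG.ordEvent φ (κ₁ ++ [aL])) ∩ Prod.snd ⁻¹' t)
        rw [← Set.preimage_inter]
        exact hsndM (hKey t ht)
    exact fun s hs => hle s hs
  -- joint measurability of the inner function
  have hG : @Measurable _ _
      ((inferInstance : MeasurableSpace (A → ℝ)).prod
        ((⨆ b ∈ κ₁, (WG.actionCyl (U := U) (Ω := Ω) b ⊔ Ifld b)) ⊔ Ifld aL)) _
      (fun x : (A → ℝ) × WG.Config U Ω => Φ (fun b => m b.val x)) := by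
    have hg : ∀ b : {c // c ∈ κ₁ ++ [aL]}, @Measurable _ _
        ((inferInstance : MeasurableSpace (A → ℝ)).prod
          ((⨆ b ∈ κ₁, (WG.actionCyl (U := U) (Ω := Ω) b ⊔ Ifld b)) ⊔ Ifld aL)) _
        (fun x : (A → ℝ) × WG.Config U Ω => m b.val x) := by
      intro b
      have hb : b.val ∈ Ap := hκmem b.val b.2
      have h1 : WG.coordField ((Ap : Set A)) ≤ (inferInstance : MeasurableSpace (A → ℝ)) := by
        refine iSup₂_le fun a _ => ?_
        exact measurable_iff_comap_le.mp (measurable_pi_apply a)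
      have h2 : Ifld b.val ≤
          (⨆ b ∈ κ₁, (WG.actionCyl (U := U) (Ω := Ω) b ⊔ Ifld b)) ⊔ Ifld aL := by
        rcases List.mem_append.mp b.2 with hbκ | hbl
        · refine le_sup_of_le_left ?_
          refine le_trans (le_sup_right :
            Ifld b.val ≤ WG.actionCyl (U := U) (Ω := Ω) b.val ⊔ Ifld b.val) ?_
          exact le_iSup₂ (f := fun (c : A) (_ : c ∈ κ₁) =>
            WG.actionCyl (U := U) (Ω := Ω) c ⊔ Ifld c) b.val hbκ
        · have hba : b.val = aL := by simpa using hbl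
          rw [hba]; exact le_sup_right
      have hprodle : (WG.coordField ((Ap : Set A))).prod (Ifld b.val) ≤
          (inferInstance : MeasurableSpace (A → ℝ)).prod
            ((⨆ b ∈ κ₁, (WG.actionCyl (U := U) (Ω := Ω) b ⊔ Ifld b)) ⊔ Ifld aL) :=
        sup_le_sup (MeasurableSpace.comap_mono h1) (MeasurableSpace.comap_mono h2)
      exact (hm b.val hb).mono hprodle le_rfl
    letI : MeasurableSpace ((A → ℝ) × WG.Config U Ω) :=
      (inferInstance : MeasurableSpace (A → ℝ)).prod
        ((⨆ b ∈ κ₁, (WG.actionCyl (U := U) (Ω := Ω) b ⊔ Ifld b)) ⊔ Ifld aL)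
    exact hΦm.comp (measurable_pi_iff.mpr hg)
  -- measurability of the indicator product function
  have hF : @Measurable _ _ ((inferInstance : MeasurableSpace (A → ℝ)).prod (Ifld aL)) _
      (fun x : (A → ℝ) × WG.Config U Ω =>
        Set.indicator (WG.ordEvent φ (κ₁ ++ [aL]))
          (fun h' => Φ fun b => m b.val (x.1, h')) x.2) := by
    intro B hB
    have hpre : (fun x : (A → ℝ) × WG.Config U Ω =>
        Set.indicator (WG.ordEvent φ (κ₁ ++ [aL]))
          (fun h' => Φ fun b => m b.val (x.1, h')) x.2) ⁻¹' B =
        ((Prod.snd ⁻¹' WG.ordEvent φ (κ₁ ++ [aL])) ∩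
          ((fun x : (A → ℝ) × WG.Config U Ω => Φ (fun b => m b.val x)) ⁻¹' B)) ∪
        ((Prod.snd ⁻¹' WG.ordEvent φ (κ₁ ++ [aL]))ᶜ ∩
          ((fun _ : (A → ℝ) × WG.Config U Ω => (0 : ℝ)) ⁻¹' B)) := by
      ext x
      by_cases hx : x.2 ∈ WG.ordEvent φ (κ₁ ++ [aL])
      · simp [Set.indicator_of_mem hx, hx]
      · simp [Set.indicator_of_notMem hx, hx]
    rw [hpre]
    refine (hKey2 _ (hG hB)).union (hT2.compl.inter ?_)
    exact (measurable_const :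
      @Measurable _ _ ((inferInstance : MeasurableSpace (A → ℝ)).prod (Ifld aL)) _
        (fun _ => (0 : ℝ))) hB
  -- the factoring map
  have hcomap : MeasurableSpace.comap
      (fun x : (A → ℝ) × WG.Config U Ω => ((x.1, Zf aL x.2) : (A → ℝ) × Zt aL))
      inferInstance = (inferInstance : MeasurableSpace (A → ℝ)).prod (Ifld aL) := by
    have h1 : (inferInstance : MeasurableSpace ((A → ℝ) × Zt aL)) =
        MeasurableSpace.comap Prod.fst inferInstance ⊔
        MeasurableSpace.comap Prod.snd inferInstance := rfl
    rw [h1, MeasurableSpace.comap_sup, MeasurableSpace.comap_comp, MeasurableSpace.comap_comp]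
    have h2 : (Prod.fst ∘ fun x : (A → ℝ) × WG.Config U Ω => ((x.1, Zf aL x.2) : (A → ℝ) × Zt aL))
        = Prod.fst := rfl
    have h3 : (Prod.snd ∘ fun x : (A → ℝ) × WG.Config U Ω => ((x.1, Zf aL x.2) : (A → ℝ) × Zt aL))
        = Zf aL ∘ Prod.snd := rfl
    rw [h2, h3, ← MeasurableSpace.comap_comp, hZgen aL haL]
    rfl
  have hFq : @Measurable _ _ (MeasurableSpace.comap
      (fun x : (A → ℝ) × WG.Config U Ω => ((x.1, Zf aL x.2) : (A → ℝ) × Zt aL))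
      inferInstance) _
      (fun x : (A → ℝ) × WG.Config U Ω =>
        Set.indicator (WG.ordEvent φ (κ₁ ++ [aL]))
          (fun h' => Φ fun b => m b.val (x.1, h')) x.2) := by
    rw [hcomap]; exact hF
  obtain ⟨Ψ, hΨm, hΨ⟩ := factor_real _ _ hFq
  exact ⟨Ψ, hΨm, fun w h => hΨ (w, h)⟩
end
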